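/- arXiv:1206.5187 — 3 statements merged into one kernel-verified Lean document; each statement's English description precedes it below -/
import Mathlib

section
/- Let $\mu \geq 0$ and let $\lambda$ be a complex number with $\mathrm{Im}(\lambda) < 0$. Define $g(\lambda) := i\lambda + (\mu^2 - \lambda^2)^{1/2}$ (principal square root). Then $|g(\lambda)| > \mu$. -/
open Complex in
theorem stmt6 (μ : ℝ) (hμ : 0 ≤ μ) (l : ℂ) (hl : l.im < 0) :
    μ < ‖Complex.I * l + ((μ:ℂ)^2 - l^2) ^ ((1:ℂ)/2)‖ := by
  set z : ℂ := (μ:ℂ)^2 - l^2 with hz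
  -- basic facts about z
  have him : z.im = -2 * l.re * l.im := by simp [hz, Complex.sub_im, Complex.mul_im, sq]; ring
  have hzre : z.im = 0 → 0 < z.re := by
    intro h
    have hre : l.re = 0 := by
      have : l.re * l.im = 0 := by nlinarith [him]
      rcases mul_eq_zero.1 this with h' | h'
      · exact h'
      · exact absurd h' hl.ne
    have hzre' : z.re = μ^2 - l.re^2 + l.im^2 := by
      simp [hz, Complex.sub_re, Complex.mul_re, sq]; ring
    nlinarith [sq_nonneg l.im, sq_nonneg μ]
  have hz0 : z ≠ 0 := by
    intro h
    have h1 : z.im = 0 := by rw [h]; rfl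
    have := hzre h1
    rw [h] at this; simp at this
  have hargpi : z.arg ≠ Real.pi := by
    intro h
    rw [Complex.arg_eq_pi_iff] at h
    exact absurd (hzre h.2) (not_lt.2 h.1.le)
  -- the square root
  set w : ℂ := z ^ ((1:ℂ)/2) with hw
  have hwsq : w ^ 2 = z := by
    rw [hw]
    have : ((1:ℂ)/2) = ((2:ℕ):ℂ)⁻¹ := by norm_num
    rw [this]
    exact Complex.cpow_nat_inv_pow z two_ne_zero
  -- Re w > 0
  have hwre : 0 < w.re := by
    have h12 : ((1:ℂ)/2) = (((1/2 : ℝ)):ℂ) := by push_cast; ring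
    rw [hw, h12, Complex.cpow_ofReal_re]
    have habs : (0:ℝ) < ‖z‖ := norm_pos_iff.mpr hz0
    have harg1 : -Real.pi < z.arg := Complex.neg_pi_lt_arg z
    have harg2 : z.arg < Real.pi := lt_of_le_of_ne (Complex.arg_le_pi z) hargpi
    have hcos : 0 < Real.cos (z.arg * (1/2)) := by
      apply Real.cos_pos_of_mem_Ioo
      constructor <;> [nlinarith [Real.pi_pos]; nlinarith [Real.pi_pos]]
    positivity
  -- product of real and imaginary parts of w
  have hprod : w.re * w.im = - l.re * l.im := by
    have : (w^2).im = z.im := by rw [hwsq]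
    rw [sq, Complex.mul_im] at this
    rw [him] at this
    nlinarith
  -- key: Im w * Re l ≥ 0
  have hkey : 0 ≤ w.im * l.re := by
    have : w.im * l.re = (- l.re^2 * l.im) / w.re := by
      rw [eq_div_iff hwre.ne']
      linear_combination l.re * hprod
    rw [this]
    apply div_nonneg _ hwre.le
    nlinarith [sq_nonneg l.re]
  -- the two factors
  have hmul : (Complex.I * l + w) * (w - Complex.I * l) = (μ:ℂ)^2 := by
    have : (Complex.I * l + w) * (w - Complex.I * l) = w^2 - Complex.I^2 * l^2 := by ring
    rw [this, Complex.I_sq, hwsq, hz]; ring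
  set a := ‖Complex.I * l + w‖ with ha
  set b := ‖w - Complex.I * l‖ with hb
  have hab : a * b = μ^2 := by
    have := congrArg (‖·‖) hmul
    rw [norm_mul] at this
    rw [ha, hb, this]
    rw [← Complex.ofReal_pow, Complex.norm_real, Real.norm_eq_abs]
    exact abs_of_nonneg (by positivity)
  have hba : b < a := by
    have hdiff : a^2 - b^2 = 4 * (w.re * (-l.im) + w.im * l.re) := by
      rw [ha, hb, ← Complex.normSq_eq_norm_sq, ← Complex.normSq_eq_norm_sq]
      simp [Complex.normSq_apply, Complex.add_re, Complex.add_im, Complex.sub_re,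
        Complex.sub_im, Complex.mul_re, Complex.mul_im, Complex.I_re, Complex.I_im]
      ring
    have hpos : 0 < a^2 - b^2 := by
      rw [hdiff]
      have h1 : 0 < w.re * (-l.im) := mul_pos hwre (by linarith)
      nlinarith
    have hb0 : 0 ≤ b := norm_nonneg _
    have ha0' : 0 ≤ a := norm_nonneg _
    nlinarith
  have ha0 : 0 < a := lt_of_le_of_lt (norm_nonneg _) hba
  have : μ^2 < a^2 := by nlinarith
  nlinarith
end

section
/- Let $\mu \geq 0$ and let $z$ be a complex number with $\mathrm{Re}(z) > 0$ and $|z| > \mu$. Define $g(\lambda) := i\lambda + (\mu^2 - \lambda^2)^{1/2}$ (principal square root) and $h(z) := -\frac{i}{2z}(z^2 - \mu^2)$. Then $g(h(z)) = z$. -/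
theorem stmt8 (μ : ℝ) (hμ : 0 ≤ μ) (z : ℂ) (hz : 0 < z.re) (hzμ : μ < ‖z‖) :
    Complex.I * (-(Complex.I / (2*z)) * (z^2 - (μ:ℂ)^2)) +
      ((μ:ℂ)^2 - (-(Complex.I / (2*z)) * (z^2 - (μ:ℂ)^2))^2) ^ ((1:ℂ)/2) = z := by
  have hz0 : z ≠ 0 := by
    intro h; rw [h] at hz; simp at hz
  set w : ℂ := (z + (μ:ℂ)^2 / z) / 2 with hw
  have hsq : (μ:ℂ)^2 - (-(Complex.I / (2*z)) * (z^2 - (μ:ℂ)^2))^2 = w^2 := by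
    rw [hw]; field_simp; ring_nf
    simp [Complex.I_sq]; ring
  have hwre : 0 < w.re := by
    have hns : 0 < Complex.normSq z := Complex.normSq_pos.2 hz0
    have : w.re = (z.re + μ^2 * z.re / Complex.normSq z) / 2 := by
      rw [hw]
      simp [Complex.div_re, Complex.add_re, Complex.normSq_apply, Complex.div_ofNat_re]
      field_simp [Complex.normSq_apply]
      have h1 : ((μ:ℂ)^2).re = μ^2 := by rw [sq, Complex.mul_re]; simp; ring
      have h2 : ((μ:ℂ)^2).im = 0 := by rw [sq, Complex.mul_im]; simp
      rw [h1, h2]; ring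
    rw [this]
    positivity
  have harg : -(Real.pi / 2) < w.arg ∧ w.arg ≤ Real.pi / 2 := by
    have := Complex.abs_arg_lt_pi_div_two_iff.2 (Or.inl hwre)
    rw [abs_lt] at this
    exact ⟨this.1, this.2.le⟩
  have hroot : (w^2) ^ ((1:ℂ)/2) = w := by
    have := Complex.sq_cpow_two_inv hwre
    simpa [one_div] using this
  rw [hsq, hroot, hw]
  field_simp
  ring_nf
  simp [Complex.I_sq]
  ring
end

section
/- Let $\mu \geq 0$. The map $g(\lambda) = i\lambda + (\mu^2-\lambda^2)^{1/2}$ (principal square root) is a bijection from the open lower half-plane $\{\lambda \in \mathbb{C} : \mathrm{Im}(\lambda) < 0\}$ onto $\{z \in \mathbb{C} : \mathrm{Re}(z) > 0, |z| > \mu\}$, with inverse $g^{-1}(z) = -\frac{i}{2z}(z^2 - \mu^2)$. -/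
lemma aux_sq10 (s : ℂ) : (s ^ ((1:ℂ)/2))^2 = s := by
  rcases eq_or_ne s 0 with h | h
  · simp [h, Complex.zero_cpow (by norm_num : (1:ℂ)/2 ≠ 0)]
  · rw [sq, ← Complex.cpow_add _ _ h]
    norm_num

lemma aux_re10 (s : ℂ) (hs : s ≠ 0) (harg : s.arg ≠ Real.pi) :
    0 < (s ^ ((1:ℂ)/2)).re := by
  rw [Complex.cpow_def_of_ne_zero hs, Complex.exp_re]
  apply mul_pos (Real.exp_pos _)
  apply Real.cos_pos_of_mem_Ioo
  have h1 := Complex.neg_pi_lt_arg s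
  have h2 := (Complex.arg_le_pi s).lt_of_ne harg
  have h3 : (Complex.log s * ((1:ℂ)/2)).im = s.arg / 2 := by
    simp [Complex.mul_im, Complex.log_im]
    ring
  rw [h3, Set.mem_Ioo]
  constructor <;> linarith

lemma aux_sqrt_sq10 (q : ℂ) (hq : 0 < q.re) : (q^2) ^ ((1:ℂ)/2) = q := by
  have hq0 : q ≠ 0 := fun h => by simp [h] at hq
  have hs0 : q^2 ≠ 0 := pow_ne_zero _ hq0
  have harg : (q^2).arg ≠ Real.pi := by
    intro h
    rw [Complex.arg_eq_pi_iff] at h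
    obtain ⟨h1', h2'⟩ := h
    simp [pow_two, Complex.mul_re, Complex.mul_im] at h1' h2'
    have h3 : q.re * q.im = 0 := by linarith
    have h4 : q.im = 0 := by
      rcases mul_eq_zero.mp h3 with h | h
      · exact absurd h (ne_of_gt hq)
      · exact h
    rw [h4] at h1'
    nlinarith
  have hre : 0 < ((q^2) ^ ((1:ℂ)/2)).re := aux_re10 _ hs0 harg
  have h1 : ((q^2) ^ ((1:ℂ)/2))^2 = q^2 := aux_sq10 _
  have h2 : ((q^2) ^ ((1:ℂ)/2) - q) * ((q^2) ^ ((1:ℂ)/2) + q) = 0 := by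
    linear_combination h1
  rcases mul_eq_zero.mp h2 with h | h
  · exact sub_eq_zero.mp h
  · exfalso
    have h5 : (q^2) ^ ((1:ℂ)/2) = -q := eq_neg_of_add_eq_zero_left h
    have h6 := congrArg Complex.re h5
    simp at h6
    linarith

lemma im_formula10 (μ : ℝ) (z l : ℂ) (h : 2*l*z = -Complex.I*(z^2 - (μ:ℂ)^2)) :
    2 * l.im * Complex.normSq z = z.re * (μ^2 - Complex.normSq z) := by
  have hre := congrArg Complex.re h
  have him := congrArg Complex.im h
  simp [Complex.mul_re, Complex.mul_im, pow_two, Complex.normSq_apply] at hre him ⊢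
  linear_combination z.re * him - z.im * hre

theorem stmt10 (μ : ℝ) (hμ : 0 ≤ μ) :
    Set.BijOn (fun l : ℂ => Complex.I * l + ((μ:ℂ)^2 - l^2) ^ ((1:ℂ)/2))
      {l : ℂ | l.im < 0} {z : ℂ | 0 < z.re ∧ μ < ‖z‖} ∧
    (∀ l : ℂ, l.im < 0 →
      -(Complex.I / (2*(Complex.I * l + ((μ:ℂ)^2 - l^2) ^ ((1:ℂ)/2)))) *
        ((Complex.I * l + ((μ:ℂ)^2 - l^2) ^ ((1:ℂ)/2))^2 - (μ:ℂ)^2) = l) ∧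
    (∀ z : ℂ, 0 < z.re → μ < ‖z‖ →
      Complex.I * (-(Complex.I / (2*z)) * (z^2 - (μ:ℂ)^2)) +
        ((μ:ℂ)^2 - (-(Complex.I / (2*z)) * (z^2 - (μ:ℂ)^2))^2) ^ ((1:ℂ)/2) = z) := by
  -- forward facts
  have forward : ∀ l : ℂ, l.im < 0 →
      0 < (Complex.I * l + ((μ:ℂ)^2 - l^2) ^ ((1:ℂ)/2)).re ∧
      μ < ‖Complex.I * l + ((μ:ℂ)^2 - l^2) ^ ((1:ℂ)/2)‖ ∧
      -(Complex.I / (2*(Complex.I * l + ((μ:ℂ)^2 - l^2) ^ ((1:ℂ)/2)))) *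
        ((Complex.I * l + ((μ:ℂ)^2 - l^2) ^ ((1:ℂ)/2))^2 - (μ:ℂ)^2) = l := by
    intro l hl
    set s : ℂ := (μ:ℂ)^2 - l^2 with hs
    have hsim : s.im = -(2 * l.re * l.im) := by
      simp [hs, pow_two, Complex.mul_im]; ring
    have hkey : s.im = 0 → 0 < s.re := by
      intro h
      rw [hsim] at h
      have hre0 : l.re = 0 := by
        rcases mul_eq_zero.mp (by linarith : (2 * l.re) * l.im = 0) with h' | h'
        · linarith
        · exact absurd h' (ne_of_lt hl)
      have hsre : s.re = μ^2 - (l.re*l.re - l.im*l.im) := by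
        simp [hs, pow_two, Complex.mul_re]
      rw [hsre, hre0]
      nlinarith
    have hs0 : s ≠ 0 := by
      intro h
      have := hkey (by rw [h]; simp)
      rw [h] at this; simp at this
    have harg : s.arg ≠ Real.pi := by
      intro h
      rw [Complex.arg_eq_pi_iff] at h
      have := hkey h.2
      linarith
    set w : ℂ := s ^ ((1:ℂ)/2) with hw
    have hw2 : w^2 = (μ:ℂ)^2 - l^2 := aux_sq10 s
    have hwre : 0 < w.re := aux_re10 s hs0 harg
    have hgre : 0 < (Complex.I * l + w).re := by
      simp [Complex.add_re, Complex.mul_re]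
      linarith
    have hg0 : Complex.I * l + w ≠ 0 := by
      intro h
      rw [h] at hgre; simp at hgre
    have hg2 : 2*l*(Complex.I*l + w) = -Complex.I*((Complex.I*l + w)^2 - (μ:ℂ)^2) := by
      linear_combination Complex.I * hw2 + (Complex.I*l^2 + 2*l*w) * Complex.I_sq
    have hNpos : (0:ℝ) < Complex.normSq (Complex.I*l + w) := Complex.normSq_pos.mpr hg0
    have him := im_formula10 μ (Complex.I*l + w) l hg2
    have hN : μ^2 < Complex.normSq (Complex.I*l + w) := by nlinarith
    have habs : μ < ‖Complex.I*l + w‖ := by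
      have h1 : ‖Complex.I*l + w‖ ^ 2 = Complex.normSq (Complex.I*l + w) :=
        Complex.sq_norm _
      nlinarith [norm_nonneg (Complex.I*l + w)]
    refine ⟨hgre, habs, ?_⟩
    field_simp
    linear_combination -hg2
  -- backward facts
  have backward : ∀ z : ℂ, 0 < z.re → μ < ‖z‖ →
      (-(Complex.I / (2*z)) * (z^2 - (μ:ℂ)^2)).im < 0 ∧
      Complex.I * (-(Complex.I / (2*z)) * (z^2 - (μ:ℂ)^2)) +
        ((μ:ℂ)^2 - (-(Complex.I / (2*z)) * (z^2 - (μ:ℂ)^2))^2) ^ ((1:ℂ)/2) = z := by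
    intro z hz habs
    have hz0 : z ≠ 0 := by
      intro h; rw [h] at hz; simp at hz
    have hNpos : (0:ℝ) < Complex.normSq z := Complex.normSq_pos.mpr hz0
    have hN : (μ:ℝ)^2 < Complex.normSq z := by
      nlinarith [Complex.sq_norm z, norm_nonneg z]
    set l : ℂ := -(Complex.I / (2*z)) * (z^2 - (μ:ℂ)^2) with hl
    have heq : 2*l*z = -Complex.I*(z^2 - (μ:ℂ)^2) := by
      rw [hl]; field_simp
    have him := im_formula10 μ z l heq
    have hlim : l.im < 0 := by nlinarith
    have hqre : 0 < ((z^2 + (μ:ℂ)^2)/(2*z)).re := by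
      rw [Complex.div_re]
      rw [Complex.normSq_apply] at hNpos hN
      simp only [pow_two, Complex.mul_re, Complex.mul_im, Complex.normSq_apply,
        Complex.add_re, Complex.add_im, Complex.ofReal_re, Complex.ofReal_im,
        Complex.re_ofNat, Complex.im_ofNat]
      rw [← add_div, lt_div_iff₀ (by nlinarith)]
      nlinarith [sq_nonneg z.im, sq_nonneg μ]
    have hsq : (μ:ℂ)^2 - l^2 = ((z^2 + (μ:ℂ)^2)/(2*z))^2 := by
      rw [hl]
      field_simp
      linear_combination (-(z^2-(μ:ℂ)^2)^2) * Complex.I_sq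
    have hsqrt : ((μ:ℂ)^2 - l^2) ^ ((1:ℂ)/2) = (z^2 + (μ:ℂ)^2)/(2*z) := by
      rw [hsq]; exact aux_sqrt_sq10 _ hqre
    refine ⟨hlim, ?_⟩
    rw [hsqrt, hl]
    field_simp
    linear_combination ((μ:ℂ)^2 - z^2) * Complex.I_sq
  refine ⟨Set.InvOn.bijOn (f' := fun z : ℂ => -(Complex.I/(2*z))*(z^2-(μ:ℂ)^2))
    ⟨?_, ?_⟩ ?_ ?_, fun l hl => (forward l hl).2.2,
    fun z hz habs => (backward z hz habs).2⟩
  · intro l hl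
    exact (forward l hl).2.2
  · intro z hz
    exact (backward z hz.1 hz.2).2
  · intro l hl
    exact ⟨(forward l hl).1, (forward l hl).2.1⟩
  · intro z hz
    exact (backward z hz.1 hz.2).1
end
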